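/- For an n-dimensional convex body K in ℝ^n and a point z in the interior of K, let N_a(K,z) denote the number (possibly infinite) of affine diameters of K passing through z, where an affine diameter is a closed segment joining two points lying in distinct parallel supporting hyperplanes of K. Then the function z ↦ N_a(K,z) is Borel measurable on the interior of K. -/

import Mathlib

open MeasureTheory
open scoped Pointwise ENNReal

open Metric Set
open scoped RealInnerProductSpace

set_option maxHeartbeats 1000000

noncomputable section

/-- An affine diameter of `K`: a pair of points of `K` lying in distinct parallel
supporting hyperplanes. -/
def IsAffDiam {n : ℕ} (K : Set (EuclideanSpace ℝ (Fin n))) (x y : EuclideanSpace ℝ (Fin n)) :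
    Prop :=
  x ∈ K ∧ y ∈ K ∧ ∃ u : EuclideanSpace ℝ (Fin n), ‖u‖ = 1 ∧
    (∀ z ∈ K, inner ℝ u z ≤ (inner ℝ u x : ℝ)) ∧
    (∀ z ∈ K, (inner ℝ u y : ℝ) ≤ inner ℝ u z) ∧
    (inner ℝ u y : ℝ) < inner ℝ u x

/-- The set of affine diameters (as segments) of `K` passing through `z`. -/
def diamsThrough {n : ℕ} (K : Set (EuclideanSpace ℝ (Fin n))) (z : EuclideanSpace ℝ (Fin n)) :
    Set (Set (EuclideanSpace ℝ (Fin n))) :=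
  {s | ∃ x y, IsAffDiam K x y ∧ s = segment ℝ x y ∧ z ∈ s}

/-- The number (possibly infinite) of affine diameters of `K` through `z`. -/
def Na {n : ℕ} (K : Set (EuclideanSpace ℝ (Fin n))) (z : EuclideanSpace ℝ (Fin n)) : ℝ≥0∞ :=
  (diamsThrough K z).encard

namespace NaMeasAux

variable {n : ℕ}

local notation "E" => EuclideanSpace ℝ (Fin n)

def Dset (K : Set E) : Set (E × E) := {p | IsAffDiam K p.1 p.2}

theorem isCompact_Dset {K : Set E} (hKc : IsCompact K)
    (hKint : (interior K).Nonempty) : IsCompact (Dset K) := by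
  classical
  set D' : Set ((E × E) × E) :=
    {q | q.1.1 ∈ K} ∩ {q | q.1.2 ∈ K} ∩ {q | ‖q.2‖ = 1} ∩
      (⋂ z ∈ K, {q | ⟪q.2, z⟫ ≤ ⟪q.2, q.1.1⟫}) ∩
      (⋂ z ∈ K, {q | ⟪q.2, q.1.2⟫ ≤ ⟪q.2, z⟫}) with hD'
  have hKcl : IsClosed K := hKc.isClosed
  have hclosed : IsClosed D' := by
    refine ((((hKcl.preimage (continuous_fst.comp continuous_fst)).inter
      (hKcl.preimage (continuous_snd.comp continuous_fst))).inter
      (isClosed_eq (continuous_norm.comp continuous_snd) continuous_const)).inter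
      (isClosed_biInter fun z _ => isClosed_le ?_ ?_)).inter
      (isClosed_biInter fun z _ => isClosed_le ?_ ?_)
    · exact continuous_snd.inner continuous_const
    · exact continuous_snd.inner (continuous_fst.comp continuous_fst)
    · exact continuous_snd.inner (continuous_snd.comp continuous_fst)
    · exact continuous_snd.inner continuous_const
  have hsub : D' ⊆ (K ×ˢ K) ×ˢ sphere (0 : E) 1 := by
    rintro ⟨⟨x, y⟩, u⟩ hq
    obtain ⟨⟨⟨⟨h1, h2⟩, h3⟩, _⟩, _⟩ := hq
    exact ⟨⟨h1, h2⟩, by simpa using h3⟩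
  have hD'c : IsCompact D' :=
    ((hKc.prod hKc).prod (isCompact_sphere 0 1)).of_isClosed_subset hclosed hsub
  have himg : Dset K = Prod.fst '' D' := by
    ext ⟨x, y⟩
    constructor
    · rintro ⟨hx, hy, u, hu, hmax, hmin, _⟩
      exact ⟨⟨(x, y), u⟩, ⟨⟨⟨⟨hx, hy⟩, hu⟩, by simpa using hmax⟩, by simpa using hmin⟩, rfl⟩
    · rintro ⟨⟨⟨x', y'⟩, u⟩, ⟨⟨⟨⟨hx, hy⟩, hu⟩, hmax⟩, hmin⟩, heq⟩
      simp only [Prod.mk.injEq] at heq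
      obtain ⟨rfl, rfl⟩ := Prod.mk.injEq .. ▸ heq
      simp only [mem_iInter, mem_setOf_eq] at hmax hmin
      refine ⟨hx, hy, u, hu, hmax, hmin, ?_⟩
      -- strictness from interior point
      obtain ⟨c, hc⟩ := hKint
      obtain ⟨r, hr0, hrball⟩ := Metric.isOpen_iff.mp isOpen_interior c hc
      have hmem : ∀ v : E, ‖v‖ = 1 → c + (r/2) • v ∈ K := by
        intro v hv
        apply interior_subset
        apply hrball
        simp [dist_eq_norm, norm_smul, hv, abs_of_pos hr0]
        linarith
      have h1 : c + (r/2) • u ∈ K := hmem u hu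
      have h2 : c + (r/2) • (-u) ∈ K := hmem (-u) (by simpa using hu)
      have hiu : ⟪u, u⟫ = (1 : ℝ) := by
        rw [real_inner_self_eq_norm_sq, hu]; norm_num
      have e1 : ⟪u, c + (r/2) • u⟫ = ⟪u, c⟫ + r/2 := by
        rw [inner_add_right, real_inner_smul_right, hiu]; ring
      have e2 : ⟪u, c + (r/2) • (-u)⟫ = ⟪u, c⟫ - r/2 := by
        rw [inner_add_right, real_inner_smul_right, inner_neg_right, hiu]; ring
      have := hmax _ h1
      have := hmin _ h2
      rw [e1] at *
      rw [e2] at *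
      linarith
  rw [himg]
  exact hD'c.image continuous_fst

def pd (p q : E × E) : ℝ :=
  min (max (dist p.1 q.1) (dist p.2 q.2)) (max (dist p.1 q.2) (dist p.2 q.1))

theorem pd_eq_zero {p q : E × E} (h : pd p q ≤ 0) :
    (p.1 = q.1 ∧ p.2 = q.2) ∨ (p.1 = q.2 ∧ p.2 = q.1) := by
  rcases min_le_iff.mp h with h' | h'
  · left
    constructor <;> rw [← dist_le_zero] <;>
      [exact (le_max_left _ _).trans h'; exact (le_max_right _ _).trans h']
  · right
    constructor <;> rw [← dist_le_zero] <;>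
      [exact (le_max_left _ _).trans h'; exact (le_max_right _ _).trans h']

theorem continuous_pd {α : Type*} [TopologicalSpace α] {f g : α → E × E}
    (hf : Continuous f) (hg : Continuous g) : Continuous fun x => pd (f x) (g x) := by
  unfold pd
  exact Continuous.min
    (Continuous.max ((continuous_fst.comp hf).dist (continuous_fst.comp hg))
      ((continuous_snd.comp hf).dist (continuous_snd.comp hg)))
    (Continuous.max ((continuous_fst.comp hf).dist (continuous_snd.comp hg))
      ((continuous_snd.comp hf).dist (continuous_fst.comp hg)))

def Cset (K : Set E) (k m : ℕ) : Set ((Fin k → E × E) × E) :=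
  {w | (∀ i, w.1 i ∈ Dset K) ∧ (∀ i, w.2 ∈ segment ℝ (w.1 i).1 (w.1 i).2) ∧
    (∀ i j, i ≠ j → 1 / (m + 1 : ℝ) ≤ pd (w.1 i) (w.1 j))}

theorem mem_segment_iff_dist {x y z : E} :
    z ∈ segment ℝ x y ↔ dist x z + dist z y = dist x y := by
  rw [mem_segment_iff_wbtw, ← dist_add_dist_eq_iff]

theorem isCompact_Cset {K : Set E} (hKc : IsCompact K) (hKconv : Convex ℝ K)
    (hKint : (interior K).Nonempty) (k m : ℕ) : IsCompact (Cset K (k + 1) m) := by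
  have hD := isCompact_Dset hKc hKint
  have hclosed : IsClosed (Cset K (k + 1) m) := by
    have h1 : IsClosed {w : (Fin (k+1) → E × E) × E | ∀ i, w.1 i ∈ Dset K} := by
      rw [setOf_forall]
      exact isClosed_iInter fun i =>
        hD.isClosed.preimage ((continuous_apply i).comp continuous_fst)
    have h2 : IsClosed {w : (Fin (k+1) → E × E) × E |
        ∀ i, w.2 ∈ segment ℝ (w.1 i).1 (w.1 i).2} := by
      rw [setOf_forall]
      refine isClosed_iInter fun i => ?_
      have : {w : (Fin (k+1) → E × E) × E | w.2 ∈ segment ℝ (w.1 i).1 (w.1 i).2} =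
          {w | dist (w.1 i).1 w.2 + dist w.2 (w.1 i).2 = dist (w.1 i).1 (w.1 i).2} := by
        ext w; exact mem_segment_iff_dist
      rw [this]
      have ci1 : Continuous fun w : (Fin (k+1) → E × E) × E => (w.1 i).1 :=
        continuous_fst.comp ((continuous_apply i).comp continuous_fst)
      have ci2 : Continuous fun w : (Fin (k+1) → E × E) × E => (w.1 i).2 :=
        continuous_snd.comp ((continuous_apply i).comp continuous_fst)
      exact isClosed_eq ((ci1.dist continuous_snd).add (continuous_snd.dist ci2)) (ci1.dist ci2)
    have h3 : IsClosed {w : (Fin (k+1) → E × E) × E |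
        ∀ i j, i ≠ j → 1 / (m + 1 : ℝ) ≤ pd (w.1 i) (w.1 j)} := by
      rw [setOf_forall]
      refine isClosed_iInter fun i => ?_
      rw [setOf_forall]
      refine isClosed_iInter fun j => ?_
      rcases eq_or_ne i j with rfl | hij
      · simp
      · have : {w : (Fin (k+1) → E × E) × E | i ≠ j → 1 / (m + 1 : ℝ) ≤ pd (w.1 i) (w.1 j)} =
            {w | 1 / (m + 1 : ℝ) ≤ pd (w.1 i) (w.1 j)} := by
          ext w; simp [hij]
        rw [this]
        apply isClosed_le continuous_const
        exact continuous_pd ((continuous_apply i).comp continuous_fst)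
          ((continuous_apply j).comp continuous_fst)
    have := h1.inter (h2.inter h3)
    rw [← setOf_and, ← setOf_and] at this
    exact this
  have hsub : Cset K (k+1) m ⊆ (Set.univ.pi fun _ : Fin (k+1) => Dset K) ×ˢ K := by
    rintro ⟨p, z⟩ ⟨hp, hz, _⟩
    refine ⟨fun i _ => hp i, ?_⟩
    have h0 := hz 0
    have hd := hp 0
    exact hKconv.segment_subset hd.1 hd.2.1 h0
  exact ((isCompact_univ_pi fun _ => isCompact_Dset hKc hKint).prod hKc).of_isClosed_subset
    hclosed hsub

theorem affdiam_ne {K : Set E} {x y : E} (h : IsAffDiam K x y) : x ≠ y := by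
  obtain ⟨-, -, u, -, -, -, hlt⟩ := h
  rintro rfl
  exact lt_irrefl _ hlt

theorem seg_endpoints {V : Type*} [AddCommGroup V] [Module ℝ V] [NoZeroSMulDivisors ℝ V]
    {x y x' y' : V} (hxy : x ≠ y)
    (h : segment ℝ x y = segment ℝ x' y') :
    (x = x' ∧ y = y') ∨ (x = y' ∧ y = x') := by
  have hx' : x' ∈ segment ℝ x y := h ▸ left_mem_segment ℝ x' y'
  have hy' : y' ∈ segment ℝ x y := h ▸ right_mem_segment ℝ x' y'
  have hx : x ∈ segment ℝ x' y' := h ▸ left_mem_segment ℝ x y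
  have hy : y ∈ segment ℝ x' y' := h ▸ right_mem_segment ℝ x y
  rw [segment_eq_image'] at hx' hy' hx hy
  obtain ⟨a, ⟨ha0, ha1⟩, hA⟩ := hx'
  obtain ⟨b, ⟨hb0, hb1⟩, hB⟩ := hy'
  obtain ⟨t, ⟨ht0, ht1⟩, hT⟩ := hx
  obtain ⟨s, ⟨hs0, hs1⟩, hS⟩ := hy
  simp only at hA hB hT hS
  subst hA hB
  have hvne : y - x ≠ 0 := sub_ne_zero.mpr (Ne.symm hxy)
  have hT' : a + t*(b-a) = 0 := by
    have h0 : (a + t*(b-a)) • (y - x) = 0 := by linear_combination (norm := module) hT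
    rcases smul_eq_zero.mp h0 with h | h
    · exact h
    · exact absurd h hvne
  have hS' : a + s*(b-a) = 1 := by
    have h0 : (a + s*(b-a) - 1) • (y - x) = 0 := by linear_combination (norm := module) hS
    rcases smul_eq_zero.mp h0 with h | h
    · linarith
    · exact absurd h hvne
  have hab : (a = 0 ∧ b = 1) ∨ (a = 1 ∧ b = 0) := by
    rcases eq_or_ne a 0 with ha | ha
    · subst ha
      have hsb : s * b = 1 := by linarith
      have hb : b = 1 := by nlinarith
      exact Or.inl ⟨rfl, hb⟩
    · have ha' : 0 < a := ha0.lt_of_ne (Ne.symm ha)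
      have htb : t * b ≥ 0 := mul_nonneg ht0 hb0
      have ht : t = 1 := by nlinarith
      have hb : b = 0 := by nlinarith
      subst hb
      have : a = 1 := by nlinarith
      exact Or.inr ⟨this, rfl⟩
  rcases hab with ⟨ha, hb⟩ | ⟨ha, hb⟩ <;> subst ha <;> subst hb
  · left
    constructor <;> module
  · right
    constructor <;> module

theorem pd_le_zero {p q : E × E} (h : pd p q ≤ 0) :
    (p.1 = q.1 ∧ p.2 = q.2) ∨ (p.1 = q.2 ∧ p.2 = q.1) := by
  rcases min_le_iff.mp h with h' | h'
  · left
    constructor <;> rw [← dist_le_zero]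
    · exact (le_max_left _ _).trans h'
    · exact (le_max_right _ _).trans h'
  · right
    constructor <;> rw [← dist_le_zero]
    · exact (le_max_left _ _).trans h'
    · exact (le_max_right _ _).trans h'

theorem seg_eq_iff_pd {p q : E × E} (hp : p.1 ≠ p.2) :
    segment ℝ p.1 p.2 = segment ℝ q.1 q.2 ↔ pd p q ≤ 0 := by
  constructor
  · intro h
    rcases seg_endpoints hp h with ⟨h1, h2⟩ | ⟨h1, h2⟩
    · exact min_le_of_left_le (by simp [h1, h2])
    · exact min_le_of_right_le (by simp [h1, h2])
  · intro h
    rcases pd_le_zero h with ⟨h1, h2⟩ | ⟨h1, h2⟩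
    · rw [h1, h2]
    · rw [h1, h2, segment_symm]

theorem level_iff {K : Set E} (k : ℕ) (z : E) :
    ((k + 1 : ℕ) : ℝ≥0∞) ≤ Na K z ↔ ∃ m : ℕ, z ∈ Prod.snd '' Cset K (k + 1) m := by
  constructor
  · intro hle
    rw [Na, show ((k + 1 : ℕ) : ℝ≥0∞) = (((k+1 : ℕ) : ℕ∞) : ℝ≥0∞) by simp,
      ENat.toENNReal_le] at hle
    obtain ⟨t, hts, htc⟩ := Set.exists_subset_encard_eq hle
    have htf : t.Finite := Set.finite_of_encard_eq_coe htc
    have hcard : htf.toFinset.card = k + 1 := by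
      rw [htf.encard_eq_coe_toFinset_card] at htc
      exact_mod_cast htc
    let e := htf.toFinset.equivFin
    let f : Fin (k+1) → Set E := fun i => (e.symm (Fin.cast hcard.symm i) : Set E)
    have hfinj : Function.Injective f := by
      intro i j hij
      have := e.symm.injective (Subtype.coe_injective hij)
      exact Fin.val_injective (by simpa [Fin.cast] using congrArg Fin.val this)
    have hfmem : ∀ i, f i ∈ diamsThrough K z := by
      intro i
      apply hts
      exact htf.mem_toFinset.mp (e.symm (Fin.cast hcard.symm i)).2
    choose x y hd hseg hz using fun i => hfmem i
    set p : Fin (k+1) → E × E := fun i => (x i, y i) with hp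
    have hppos : ∀ i j, i ≠ j → 0 < pd (p i) (p j) := by
      intro i j hij
      by_contra hle'
      push_neg at hle'
      have hseq : segment ℝ (p i).1 (p i).2 = segment ℝ (p j).1 (p j).2 :=
        (seg_eq_iff_pd (affdiam_ne (hd i))).mpr hle'
      apply hij
      apply hfinj
      rw [hseg i, hseg j]
      exact hseq
    -- find a uniform bound
    classical
    obtain ⟨ε, hε0, hεle⟩ : ∃ ε > 0, ∀ i j, i ≠ j → ε ≤ pd (p i) (p j) := by
      rcases (Finset.univ.offDiag.image fun ij : Fin (k+1) × Fin (k+1) =>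
        pd (p ij.1) (p ij.2)).eq_empty_or_nonempty with hF | hF
      · refine ⟨1, one_pos, fun i j hij => absurd hF ?_⟩
        apply Finset.Nonempty.ne_empty
        exact ⟨pd (p i) (p j), Finset.mem_image.mpr ⟨(i, j),
          Finset.mem_offDiag.mpr ⟨Finset.mem_univ _, Finset.mem_univ _, hij⟩, rfl⟩⟩
      · set F := Finset.univ.offDiag.image fun ij : Fin (k+1) × Fin (k+1) =>
          pd (p ij.1) (p ij.2)
        refine ⟨F.min' hF, ?_, fun i j hij => Finset.min'_le _ _ ?_⟩
        · obtain ⟨ij, hijF, hval⟩ := Finset.mem_image.mp (F.min'_mem hF)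
          rw [← hval]
          exact hppos _ _ (Finset.mem_offDiag.mp hijF).2.2
        · exact Finset.mem_image.mpr ⟨(i, j),
            Finset.mem_offDiag.mpr ⟨Finset.mem_univ _, Finset.mem_univ _, hij⟩, rfl⟩
    obtain ⟨m, hm⟩ := exists_nat_ge (1 / ε)
    refine ⟨m, (p, z), ⟨fun i => hd i, fun i => ?_, fun i j hij => ?_⟩, rfl⟩
    · have := hz i
      rwa [hseg i] at this
    · refine le_trans ?_ (hεle i j hij)
      rw [div_le_iff₀ (by positivity)]
      rw [div_le_iff₀ hε0] at hm
      nlinarith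
  · rintro ⟨m, ⟨p, z'⟩, ⟨hd, hseg, hpd⟩, rfl⟩
    set f : Fin (k+1) → Set E := fun i => segment ℝ (p i).1 (p i).2 with hf
    have hfinj : Function.Injective f := by
      intro i j hij
      by_contra hne
      have h0 : pd (p i) (p j) ≤ 0 := (seg_eq_iff_pd (affdiam_ne (hd i))).mp hij
      have := hpd i j hne
      have : (0:ℝ) < 1 / (m + 1 : ℝ) := by positivity
      linarith [hpd i j hne]
    have hsub : Set.range f ⊆ diamsThrough K z' := by
      rintro s ⟨i, rfl⟩
      exact ⟨(p i).1, (p i).2, hd i, rfl, hseg i⟩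
    calc ((k + 1 : ℕ) : ℝ≥0∞) = ((Set.range f).encard : ℝ≥0∞) := by
          rw [← Set.image_univ, hfinj.encard_image, Set.encard_univ]
          simp
      _ ≤ Na K z' := by
          rw [Na, ENat.toENNReal_le]
          exact Set.encard_mono hsub

theorem nat_fiber_aux {e : ℕ∞} {c : ℕ} (h1 : ((c : ℕ) : ℝ≥0∞) ≤ (e : ℝ≥0∞))
    (h2 : ¬(((c + 1 : ℕ) : ℕ∞) : ℝ≥0∞) ≤ (e : ℝ≥0∞)) : (e : ℝ≥0∞) = ((c : ℕ) : ℝ≥0∞) := by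
  rw [ENat.toENNReal_le] at h2
  have h1' : ((c : ℕ) : ℕ∞) ≤ e := by
    rw [← ENat.toENNReal_le]
    simpa using h1
  cases e with
  | top => exact absurd le_top h2
  | coe d =>
    have hc : c ≤ d := by exact_mod_cast h1'
    have hd : d < c + 1 := by
      by_contra hcon
      push_neg at hcon
      exact h2 (by exact_mod_cast hcon)
    have : d = c := by omega
    subst this
    simp

theorem measurable_Na {K : Set E} (hKc : IsCompact K) (hKconv : Convex ℝ K)
    (hKint : (interior K).Nonempty) : Measurable (Na K) := by
  have hA : ∀ k : ℕ, MeasurableSet {z : E | ((k : ℕ) : ℝ≥0∞) ≤ Na K z} := by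
    intro k
    cases k with
    | zero => simp
    | succ k =>
      have heq : {z : E | ((k + 1 : ℕ) : ℝ≥0∞) ≤ Na K z} =
          ⋃ m : ℕ, Prod.snd '' Cset K (k + 1) m := by
        ext z
        simp only [Set.mem_setOf_eq, Set.mem_iUnion]
        exact level_iff k z
      rw [heq]
      exact MeasurableSet.iUnion fun m =>
        ((isCompact_Cset hKc hKconv hKint k m).image continuous_snd).isClosed.measurableSet
  have hfib : ∀ v : ℝ≥0∞, MeasurableSet (Na K ⁻¹' {v}) := by
    intro v
    rcases eq_or_ne v ⊤ with rfl | hvt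
    · have heq : Na K ⁻¹' {⊤} = ⋂ k : ℕ, {z : E | ((k : ℕ) : ℝ≥0∞) ≤ Na K z} := by
        ext z
        simp only [Set.mem_preimage, Set.mem_singleton_iff, Set.mem_iInter, Set.mem_setOf_eq]
        constructor
        · intro h k
          rw [h]
          exact le_top
        · intro h
          by_contra hne
          obtain ⟨k, hk⟩ := ENNReal.exists_nat_gt hne
          exact absurd (h k) (not_le.mpr hk)
      rw [heq]
      exact MeasurableSet.iInter fun k => hA k
    · by_cases hvn : ∃ c : ℕ, v = ((c : ℕ) : ℝ≥0∞)
      · obtain ⟨c, rfl⟩ := hvn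
        have heq : Na K ⁻¹' {((c : ℕ) : ℝ≥0∞)} =
            {z : E | ((c : ℕ) : ℝ≥0∞) ≤ Na K z} \ {z : E | ((c + 1 : ℕ) : ℝ≥0∞) ≤ Na K z} := by
          ext z
          simp only [Set.mem_preimage, Set.mem_singleton_iff, Set.mem_diff, Set.mem_setOf_eq]
          constructor
          · intro h
            refine ⟨le_of_eq h.symm, ?_⟩
            rw [h]
            intro hcon
            have : ((c : ℕ) : ℝ≥0∞) < ((c + 1 : ℕ) : ℝ≥0∞) := by
              exact_mod_cast Nat.lt_succ_self c
            exact absurd (le_trans hcon (le_refl _)) (not_le.mpr this)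
          · rintro ⟨h1, h2⟩
            have h2' : ¬(((c + 1 : ℕ) : ℕ∞) : ℝ≥0∞) ≤ Na K z := by simpa using h2
            exact nat_fiber_aux h1 h2'
        rw [heq]
        exact (hA c).diff (hA (c + 1))
      · have heq : Na K ⁻¹' {v} = ∅ := by
          ext z
          simp only [Set.mem_preimage, Set.mem_singleton_iff, Set.mem_empty_iff_false,
            iff_false]
          intro h
          cases henc : (diamsThrough K z).encard with
          | top =>
            rw [Na, henc] at h
            exact hvt (h.symm.trans (by simp))
          | coe d =>
            rw [Na, henc] at h
            exact hvn ⟨d, h.symm.trans (by simp)⟩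
        rw [heq]
        exact MeasurableSet.empty
  intro S hS
  have heq : Na K ⁻¹' S = ⋃ v ∈ Set.range (Na K) ∩ S, Na K ⁻¹' {v} := by
    ext z
    simp only [Set.mem_preimage, Set.mem_iUnion, Set.mem_inter_iff, Set.mem_singleton_iff,
      Set.mem_range, exists_prop]
    constructor
    · intro h
      exact ⟨Na K z, ⟨⟨z, rfl⟩, h⟩, rfl⟩
    · rintro ⟨v, ⟨_, hvS⟩, hzv⟩
      rw [hzv]
      exact hvS
  rw [heq]
  have hcnt : (Set.range (Na K) ∩ S).Countable := by
    apply Set.Countable.mono Set.inter_subset_left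
    have : Set.range (Na K) ⊆ Set.range (ENat.toENNReal) := by
      rintro v ⟨z, rfl⟩
      exact ⟨(diamsThrough K z).encard, rfl⟩
    exact (Set.countable_range _).mono this
  exact MeasurableSet.biUnion hcnt fun v _ => hfib v


end NaMeasAux

open NaMeasAux in
theorem Na_measurable {n : ℕ} (K : Set (EuclideanSpace ℝ (Fin n)))
    (hKc : IsCompact K) (hKconv : Convex ℝ K) (hKint : (interior K).Nonempty) :
    Measurable fun z : interior K => Na K z := by
  exact (measurable_Na hKc hKconv hKint).comp measurable_subtype_coe
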